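/- Let b : (S¹×S¹)⁴ → ℝ be any alternating, H-invariant (for the twisted orientation-sign action) bounded function, and let x₀,…,x₄ and y₀,…,y₄ be positively cyclically ordered points of S¹. Then the simplicial coboundary δb vanishes on the 5-tuple w = ((x₀,y₀),(x₁,y₂),(x₂,y₄),(x₃,y₁),(x₄,y₃)): δb(w) = Σ_{i=0}^{4} (−1)ⁱ b(ŵⁱ) = 0, where ŵⁱ omits the i-th coordinate. Consequently ‖Θ + δb‖_∞ ≥ 2/3 for every such b, and the seminorm of the bounded cohomology class of Θ equals 2/3. -/

import Mathlib

open scoped BigOperators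

set_option maxHeartbeats 1000000
set_option maxRecDepth 100000


/-- Orientation cocycle on the circle: +1 for positively oriented (counterclockwise)
triples of distinct points, -1 for negatively oriented triples, 0 if two coincide. -/
noncomputable def orient (a b c : Circle) : ℝ :=
  Real.sign (((starRingEnd ℂ) ((b : ℂ) - (a : ℂ)) * ((c : ℂ) - (a : ℂ))).im)

/-- `x 0, …, x (n-1)` are positively cyclically ordered according to their numbering. -/
def PosCyclicallyOrdered {n : ℕ} (x : Fin n → Circle) : Prop :=
  ∀ i j k : Fin n, i < j → j < k → orient (x i) (x j) (x k) = 1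

/-- Θ = Alt(Or₁ ∪ Or₂). -/
noncomputable def Theta (z : Fin 5 → Circle × Circle) : ℝ :=
  (1 / 120) * ∑ σ : Equiv.Perm (Fin 5),
    ((Equiv.Perm.sign σ : ℤ) : ℝ) *
      (orient (z (σ 0)).1 (z (σ 1)).1 (z (σ 2)).1 *
        orient (z (σ 2)).2 (z (σ 3)).2 (z (σ 4)).2)


/-- An isometry of the hyperbolic plane in the Poincaré disk model: the Möbius
transformation `z ↦ (a z + b)/(b̄ z + ā)` with `|a|² - |b|² = 1` (orientation
preserving when `pres = true`), precomposed with complex conjugation when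
`pres = false` (orientation reversing). -/
structure DiskIsom where
  a : ℂ
  b : ℂ
  hnorm : Complex.normSq a - Complex.normSq b = 1
  pres : Bool

namespace DiskIsom

/-- The action on the (closed) disk and its boundary circle. -/
noncomputable def apply (g : DiskIsom) (z : ℂ) : ℂ :=
  (g.a * (if g.pres then z else (starRingEnd ℂ) z) + g.b) /
    ((starRingEnd ℂ) g.b * (if g.pres then z else (starRingEnd ℂ) z) + (starRingEnd ℂ) g.a)

/-- The boundary action on the circle `S¹ = ∂ℍ²`. -/
noncomputable def applyS (g : DiskIsom) (x : Circle) : Circle :=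
  Circle.exp (Complex.arg (g.apply (x : ℂ)))

/-- The orientation sign of an isometry. -/
noncomputable def sgn (g : DiskIsom) : ℝ := if g.pres then 1 else -1

/-- The inverse isometry. -/
noncomputable def inv (g : DiskIsom) : DiskIsom where
  a := if g.pres then (starRingEnd ℂ) g.a else g.a
  b := -g.b
  hnorm := by
    rcases g.pres with _ | _ <;>
      simp [Complex.normSq_conj, g.hnorm]
  pres := g.pres

end DiskIsom

/-- The geodesic of the hyperbolic plane (Poincaré disk model) with ideal
endpoints `u, v ∈ S¹`, as a subset of the open unit disk in `ℂ`. -/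
def geodesic (u v : Circle) : Set ℂ :=
  {z | ‖z‖ < 1 ∧
    (1 + Complex.normSq z) * ((u : ℂ) + (v : ℂ)) - 2 * z
      - 2 * (u : ℂ) * (v : ℂ) * (starRingEnd ℂ) z = 0}

/-- A cochain is alternating. -/
def Alternating {n : ℕ} {X : Type*} (f : (Fin n → X) → ℝ) : Prop :=
  ∀ (σ : Equiv.Perm (Fin n)) (z : Fin n → X),
    f (fun i => z (σ i)) = ((Equiv.Perm.sign σ : ℤ) : ℝ) * f z

/-- Invariance of a cochain on `(S¹ × S¹)^n` under the twisted (orientation-sign)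
action of `H = Isom(ℍ² × ℍ²)`, expressed on the generators: pairs of isometries of
`ℍ²` acting factorwise through their boundary action, and the factor swap. -/
def HInvariant {n : ℕ} (f : (Fin n → Circle × Circle) → ℝ) : Prop :=
  (∀ (g h : DiskIsom) (z : Fin n → Circle × Circle),
      f (fun i => (g.applyS (z i).1, h.applyS (z i).2)) = g.sgn * h.sgn * f z) ∧
  (∀ z : Fin n → Circle × Circle, f (fun i => ((z i).2, (z i).1)) = f z)

/-- The simplicial coboundary of a cochain. -/
noncomputable def cobdry {n : ℕ} {X : Type*} (f : (Fin (n + 1) → X) → ℝ) :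
    (Fin (n + 2) → X) → ℝ :=
  fun z => ∑ i : Fin (n + 2), (-1 : ℝ) ^ (i : ℕ) * f (fun j => z (i.succAbove j))

open Classical in
/-- Number of distinct first coordinates of a tuple in `S¹ × S¹`. -/
noncomputable def ncard₁ {n : ℕ} (z : Fin n → Circle × Circle) : ℕ :=
  (Finset.univ.image fun i => (z i).1).card

open Classical in
/-- Number of distinct second coordinates of a tuple in `S¹ × S¹`. -/
noncomputable def ncard₂ {n : ℕ} (z : Fin n → Circle × Circle) : ℕ :=
  (Finset.univ.image fun i => (z i).2).card


/-- For every alternating, bounded, `H`-invariant 3-cochain `b` the coboundary `δb`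
vanishes on the extremal 5-tuple `w = ((x₀,y₀),(x₁,y₂),(x₂,y₄),(x₃,y₁),(x₄,y₃))`,
hence `‖Θ + δb‖_∞ ≥ 2/3`: the seminorm of the bounded cohomology class of `Θ`
equals `2/3`. -/
noncomputable def Idet (a b c : Circle) : ℝ :=
  ((starRingEnd ℂ) ((b : ℂ) - (a : ℂ)) * ((c : ℂ) - (a : ℂ))).im

lemma denom_ne_zero {a b : ℂ} (hn : Complex.normSq a - Complex.normSq b = 1)
    {z : ℂ} (hz : ‖z‖ = 1) : (starRingEnd ℂ) b * z + (starRingEnd ℂ) a ≠ 0 := by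
  intro h
  have h1 : (starRingEnd ℂ) a = -((starRingEnd ℂ) b * z) := by linear_combination h
  have h2 : ‖a‖ = ‖b‖ := by
    have := congrArg (‖·‖) h1
    simpa [norm_mul, hz, Complex.norm_conj] using this
  have h3 : Complex.normSq a = Complex.normSq b := by
    rw [Complex.normSq_eq_norm_sq, Complex.normSq_eq_norm_sq, h2]
  rw [h3] at hn; simp at hn

lemma applyS_eq_of_pres (g : DiskIsom) (hpres : g.pres = true) (z w : Circle)
    (hnum : g.a * (z : ℂ) + g.b =
      (w : ℂ) * ((starRingEnd ℂ) g.b * (z : ℂ) + (starRingEnd ℂ) g.a)) :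
    g.applyS z = w := by
  have hden := denom_ne_zero g.hnorm (Circle.norm_coe z)
  have happ : g.apply (z : ℂ) = (w : ℂ) := by
    rw [DiskIsom.apply, hpres, if_pos rfl, hnum, mul_div_assoc, div_self hden, mul_one]
  rw [DiskIsom.applyS, happ, Circle.exp_arg]

lemma applyS_eq_of_rev (g : DiskIsom) (hpres : g.pres = false) (z w : Circle)
    (hnum : g.a * (starRingEnd ℂ) (z : ℂ) + g.b =
      (w : ℂ) * ((starRingEnd ℂ) g.b * (starRingEnd ℂ) (z : ℂ) + (starRingEnd ℂ) g.a)) :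
    g.applyS z = w := by
  have hz : ‖(starRingEnd ℂ) (z : ℂ)‖ = 1 := by
    rw [Complex.norm_conj]; exact Circle.norm_coe z
  have hden := denom_ne_zero g.hnorm hz
  have happ : g.apply (z : ℂ) = (w : ℂ) := by
    rw [DiskIsom.apply, hpres]
    simp only [Bool.false_eq_true, if_false]
    rw [hnum, mul_div_assoc, div_self hden, mul_one]
  rw [DiskIsom.applyS, happ, Circle.exp_arg]

lemma main_identity (p q r s : ℂ) (hp : p ≠ 0) (hq : q ≠ 0) (hr : r ≠ 0) (hs : s ≠ 0)
    (hcp : (starRingEnd ℂ) p = p⁻¹) (hcq : (starRingEnd ℂ) q = q⁻¹)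
    (hcr : (starRingEnd ℂ) r = r⁻¹) (hcs : (starRingEnd ℂ) s = s⁻¹) :
    -(-(p * r - q * s) ^ 2 - (p * q * (s - r) + r * s * (q - p)) * (p + r - q - s)) *
        ((r - p) * (starRingEnd ℂ) (r - p)) =
      (p * q * r * s) *
        ((starRingEnd ℂ) (q - p) * (r - p) - (starRingEnd ℂ) ((starRingEnd ℂ) (q - p) * (r - p))) *
        ((starRingEnd ℂ) (r - p) * (s - p) - (starRingEnd ℂ) ((starRingEnd ℂ) (r - p) * (s - p))) := by
  simp only [map_sub, map_mul, map_inv₀, Complex.conj_conj, hcp, hcq, hcr, hcs, inv_inv]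
  field_simp
  ring

lemma conj_alpha (p q r s : ℂ) (hp : p ≠ 0) (hq : q ≠ 0) (hr : r ≠ 0) (hs : s ≠ 0)
    (hcp : (starRingEnd ℂ) p = p⁻¹) (hcq : (starRingEnd ℂ) q = q⁻¹)
    (hcr : (starRingEnd ℂ) r = r⁻¹) (hcs : (starRingEnd ℂ) s = s⁻¹) :
    (starRingEnd ℂ) (p * r - q * s) = -(p * r - q * s) * (p * q * r * s)⁻¹ := by
  simp only [map_sub, map_mul, hcp, hcq, hcr, hcs]
  apply mul_left_cancel₀ (mul_ne_zero (mul_ne_zero (mul_ne_zero hp hq) hr) hs)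
  field_simp
  ring

lemma conj_beta (p q r s : ℂ) (hp : p ≠ 0) (hq : q ≠ 0) (hr : r ≠ 0) (hs : s ≠ 0)
    (hcp : (starRingEnd ℂ) p = p⁻¹) (hcq : (starRingEnd ℂ) q = q⁻¹)
    (hcr : (starRingEnd ℂ) r = r⁻¹) (hcs : (starRingEnd ℂ) s = s⁻¹) :
    (starRingEnd ℂ) (p * q * (s - r) + r * s * (q - p)) = (p + r - q - s) * (p * q * r * s)⁻¹ := by
  simp only [map_add, map_sub, map_mul, hcp, hcq, hcr, hcs]
  apply mul_left_cancel₀ (mul_ne_zero (mul_ne_zero (mul_ne_zero hp hq) hr) hs)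
  field_simp
  ring


lemma exists_swap_core (u1 u2 u3 u4 : Circle)
    (hIne : Idet u1 u2 u3 * Idet u1 u3 u4 ≠ 0) :
    ∃ K : ℝ, K ≠ 0 ∧
      (0 < Idet u1 u2 u3 * Idet u1 u3 u4 → 0 < K) ∧
      (Idet u1 u2 u3 * Idet u1 u3 u4 < 0 → K < 0) ∧
      ((K : ℂ) * ((u1:ℂ) * (u2:ℂ) * (u3:ℂ) * (u4:ℂ)) =
        -((u1:ℂ) * (u3:ℂ) - (u2:ℂ) * (u4:ℂ)) ^ 2 -
          ((u1:ℂ) * (u2:ℂ) * ((u4:ℂ) - (u3:ℂ)) + (u3:ℂ) * (u4:ℂ) * ((u2:ℂ) - (u1:ℂ))) *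
            ((u1:ℂ) + (u3:ℂ) - (u2:ℂ) - (u4:ℂ))) := by
  set p := (u1 : ℂ); set q := (u2 : ℂ); set r := (u3 : ℂ); set s := (u4 : ℂ)
  have hI1 : Idet u1 u2 u3 ≠ 0 := fun h => hIne (by rw [h, zero_mul])
  have hI2 : Idet u1 u3 u4 ≠ 0 := fun h => hIne (by rw [h, mul_zero])
  have hrp : r - p ≠ 0 := by
    intro h
    apply hI1
    have : ((starRingEnd ℂ) (q - p) * (r - p)).im = 0 := by rw [h, mul_zero, Complex.zero_im]
    exact this
  have hns : Complex.normSq (r - p) ≠ 0 := fun h => hrp (Complex.normSq_eq_zero.1 h)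
  have hnspos : 0 < Complex.normSq (r - p) := lt_of_le_of_ne (Complex.normSq_nonneg _) (Ne.symm hns)
  refine ⟨4 * Idet u1 u2 u3 * Idet u1 u3 u4 / Complex.normSq (r - p),
    div_ne_zero (mul_ne_zero (mul_ne_zero four_ne_zero hI1) hI2) hns, ?_, ?_, ?_⟩
  · intro h; exact div_pos (by nlinarith) hnspos
  · intro h; exact div_neg_of_neg_of_pos (by nlinarith) hnspos
  · have hcp : (starRingEnd ℂ) p = p⁻¹ := by rw [← Circle.coe_inv_eq_conj, Circle.coe_inv]
    have hcq : (starRingEnd ℂ) q = q⁻¹ := by rw [← Circle.coe_inv_eq_conj, Circle.coe_inv]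
    have hcr : (starRingEnd ℂ) r = r⁻¹ := by rw [← Circle.coe_inv_eq_conj, Circle.coe_inv]
    have hcs : (starRingEnd ℂ) s = s⁻¹ := by rw [← Circle.coe_inv_eq_conj, Circle.coe_inv]
    have hmain := main_identity p q r s (Circle.coe_ne_zero u1) (Circle.coe_ne_zero u2)
      (Circle.coe_ne_zero u3) (Circle.coe_ne_zero u4) hcp hcq hcr hcs
    have h1 : (starRingEnd ℂ) (q - p) * (r - p) - (starRingEnd ℂ) ((starRingEnd ℂ) (q - p) * (r - p))
        = 2 * ((Idet u1 u2 u3 : ℝ) : ℂ) * Complex.I := by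
      rw [Complex.sub_conj]; push_cast [Idet]; ring
    have h2 : (starRingEnd ℂ) (r - p) * (s - p) - (starRingEnd ℂ) ((starRingEnd ℂ) (r - p) * (s - p))
        = 2 * ((Idet u1 u3 u4 : ℝ) : ℂ) * Complex.I := by
      rw [Complex.sub_conj]; push_cast [Idet]; ring
    rw [h1, h2] at hmain
    have hmc : ((Complex.normSq (r - p) : ℝ) : ℂ) = (r - p) * (starRingEnd ℂ) (r - p) :=
      (Complex.mul_conj _).symm
    have hnsC : (r - p) * (starRingEnd ℂ) (r - p) ≠ 0 := by
      rw [← hmc]; exact_mod_cast hns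
    apply mul_right_cancel₀ hnsC
    calc ((4 * Idet u1 u2 u3 * Idet u1 u3 u4 / Complex.normSq (r - p) : ℝ) : ℂ) * (p * q * r * s)
          * ((r - p) * (starRingEnd ℂ) (r - p))
        = (((4 * Idet u1 u2 u3 * Idet u1 u3 u4 / Complex.normSq (r - p) : ℝ) : ℂ)
            * ((Complex.normSq (r - p) : ℝ) : ℂ)) * (p * q * r * s) := by rw [hmc]; ring
      _ = ((4 * Idet u1 u2 u3 * Idet u1 u3 u4 : ℝ) : ℂ) * (p * q * r * s) := by
          rw [← Complex.ofReal_mul, div_mul_cancel₀ _ hns]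
      _ = (-(p * r - q * s) ^ 2 - (p * q * (s - r) + r * s * (q - p)) * (p + r - q - s))
          * ((r - p) * (starRingEnd ℂ) (r - p)) := by
          push_cast
          linear_combination hmain + 4 * (p * q * r * s) * ((Idet u1 u2 u3 : ℝ) : ℂ)
            * ((Idet u1 u3 u4 : ℝ) : ℂ) * Complex.I_sq

lemma exists_pres_swap (u1 u2 u3 u4 : Circle)
    (hI : 0 < Idet u1 u2 u3 * Idet u1 u3 u4) :
    ∃ g : DiskIsom, g.pres = true ∧ g.applyS u1 = u3 ∧ g.applyS u2 = u4 ∧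
      g.applyS u3 = u1 ∧ g.applyS u4 = u2 := by
  obtain ⟨K, hKne, hKpos', _, hKid⟩ := exists_swap_core u1 u2 u3 u4 (ne_of_gt hI)
  have hKpos := hKpos' hI
  set p := (u1 : ℂ) with hpdef; set q := (u2 : ℂ) with hqdef
  set r := (u3 : ℂ) with hrdef; set s := (u4 : ℂ) with hsdef
  have hp0 := Circle.coe_ne_zero u1; have hq0 := Circle.coe_ne_zero u2
  have hr0 := Circle.coe_ne_zero u3; have hs0 := Circle.coe_ne_zero u4
  have hcp : (starRingEnd ℂ) p = p⁻¹ := by rw [← Circle.coe_inv_eq_conj, Circle.coe_inv]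
  have hcq : (starRingEnd ℂ) q = q⁻¹ := by rw [← Circle.coe_inv_eq_conj, Circle.coe_inv]
  have hcr : (starRingEnd ℂ) r = r⁻¹ := by rw [← Circle.coe_inv_eq_conj, Circle.coe_inv]
  have hcs : (starRingEnd ℂ) s = s⁻¹ := by rw [← Circle.coe_inv_eq_conj, Circle.coe_inv]
  have hPine : p * q * r * s ≠ 0 :=
    mul_ne_zero (mul_ne_zero (mul_ne_zero hp0 hq0) hr0) hs0
  have habs : ‖p * q * r * s‖ = 1 := by
    rw [hpdef, hqdef, hrdef, hsdef]
    simp [map_mul, Circle.norm_coe]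
  have hexp : Complex.exp ((Complex.arg (p * q * r * s) : ℝ) * Complex.I) = p * q * r * s := by
    have := Complex.norm_mul_exp_arg_mul_I (p * q * r * s)
    rwa [habs, Complex.ofReal_one, one_mul] at this
  set ω : ℂ := Complex.exp ((-(Complex.arg (p * q * r * s)) / 2 : ℝ) * Complex.I) with hωdef
  have hωne : ω ≠ 0 := Complex.exp_ne_zero _
  have hω2 : ω ^ 2 = (p * q * r * s)⁻¹ := by
    rw [hωdef, sq, ← Complex.exp_add,
      show ((-(Complex.arg (p * q * r * s)) / 2 : ℝ) : ℂ) * Complex.I +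
          ((-(Complex.arg (p * q * r * s)) / 2 : ℝ) : ℂ) * Complex.I
        = -((Complex.arg (p * q * r * s) : ℝ) * Complex.I) by push_cast; ring,
      Complex.exp_neg, hexp]
  have hcω : (starRingEnd ℂ) ω = ω⁻¹ := by
    rw [hωdef, ← Complex.exp_conj, ← Complex.exp_neg, map_mul, Complex.conj_ofReal,
      Complex.conj_I]
    ring_nf
  have hcalpha := conj_alpha p q r s hp0 hq0 hr0 hs0 hcp hcq hcr hcs
  have hcbeta := conj_beta p q r s hp0 hq0 hr0 hs0 hcp hcq hcr hcs
  set t : ℝ := Real.sqrt K⁻¹ with htdef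
  have ht2 : (t : ℝ) ^ 2 = K⁻¹ := Real.sq_sqrt (le_of_lt (inv_pos.2 hKpos))
  set a : ℂ := (t : ℂ) * ω * (p * r - q * s) with hadef
  set b : ℂ := (t : ℂ) * ω * (p * q * (s - r) + r * s * (q - p)) with hbdef
  have hconja : (starRingEnd ℂ) a = -((t : ℂ) * ω * (p * r - q * s)) := by
    rw [hadef, map_mul, map_mul, Complex.conj_ofReal, hcω, hcalpha, ← hω2]
    field_simp
  have hconjb : (starRingEnd ℂ) b = (t : ℂ) * ω * (p + r - q - s) := by
    rw [hbdef, map_mul, map_mul, Complex.conj_ofReal, hcω, hcbeta, ← hω2]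
    field_simp
  have hnormC : ((Complex.normSq a - Complex.normSq b : ℝ) : ℂ) = 1 := by
    push_cast
    rw [← Complex.mul_conj, ← Complex.mul_conj, hconja, hconjb]
    rw [show a * -((t : ℂ) * ω * (p * r - q * s)) - b * ((t : ℂ) * ω * (p + r - q - s))
        = ((t : ℝ) : ℂ) ^ 2 * (ω ^ 2 * (-(p * r - q * s) ^ 2 -
          (p * q * (s - r) + r * s * (q - p)) * (p + r - q - s))) by rw [hadef, hbdef]; ring]
    rw [← hKid, hω2]
    rw [show ((p * q * r * s)⁻¹ * ((K : ℝ) * (p * q * r * s)) : ℂ) = ((K : ℝ) : ℂ) by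
      field_simp; exact mul_div_cancel_left₀ _ hPine]
    rw [show (((t : ℝ) : ℂ)) ^ 2 * ((K : ℝ) : ℂ) = ((t ^ 2 * K : ℝ) : ℂ) by push_cast; ring]
    rw [ht2, inv_mul_cancel₀ hKne, Complex.ofReal_one]
  have hnorm : Complex.normSq a - Complex.normSq b = 1 := by exact_mod_cast hnormC
  refine ⟨⟨a, b, hnorm, true⟩, rfl, ?_, ?_, ?_, ?_⟩
  · apply applyS_eq_of_pres _ rfl
    show a * p + b = r * ((starRingEnd ℂ) b * p + (starRingEnd ℂ) a)
    rw [hconja, hconjb, hadef, hbdef]; ring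
  · apply applyS_eq_of_pres _ rfl
    show a * q + b = s * ((starRingEnd ℂ) b * q + (starRingEnd ℂ) a)
    rw [hconja, hconjb, hadef, hbdef]; ring
  · apply applyS_eq_of_pres _ rfl
    show a * r + b = p * ((starRingEnd ℂ) b * r + (starRingEnd ℂ) a)
    rw [hconja, hconjb, hadef, hbdef]; ring
  · apply applyS_eq_of_pres _ rfl
    show a * s + b = q * ((starRingEnd ℂ) b * s + (starRingEnd ℂ) a)
    rw [hconja, hconjb, hadef, hbdef]; ring

lemma exists_rev_swap (u1 u2 u3 u4 : Circle)
    (hI : Idet u1 u2 u3 * Idet u1 u3 u4 < 0) :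
    ∃ g : DiskIsom, g.pres = false ∧ g.applyS u1 = u3 ∧ g.applyS u2 = u4 ∧
      g.applyS u3 = u1 ∧ g.applyS u4 = u2 := by
  obtain ⟨K, hKne, _, hKneg', hKid⟩ := exists_swap_core u1 u2 u3 u4 (ne_of_lt hI)
  have hKneg := hKneg' hI
  set p := (u1 : ℂ) with hpdef; set q := (u2 : ℂ) with hqdef
  set r := (u3 : ℂ) with hrdef; set s := (u4 : ℂ) with hsdef
  have hp0 := Circle.coe_ne_zero u1; have hq0 := Circle.coe_ne_zero u2
  have hr0 := Circle.coe_ne_zero u3; have hs0 := Circle.coe_ne_zero u4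
  have hcp : (starRingEnd ℂ) p = p⁻¹ := by rw [← Circle.coe_inv_eq_conj, Circle.coe_inv]
  have hcq : (starRingEnd ℂ) q = q⁻¹ := by rw [← Circle.coe_inv_eq_conj, Circle.coe_inv]
  have hcr : (starRingEnd ℂ) r = r⁻¹ := by rw [← Circle.coe_inv_eq_conj, Circle.coe_inv]
  have hcs : (starRingEnd ℂ) s = s⁻¹ := by rw [← Circle.coe_inv_eq_conj, Circle.coe_inv]
  have hPine : p * q * r * s ≠ 0 :=
    mul_ne_zero (mul_ne_zero (mul_ne_zero hp0 hq0) hr0) hs0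
  have habs : ‖p * q * r * s‖ = 1 := by
    rw [hpdef, hqdef, hrdef, hsdef]
    simp [map_mul, Circle.norm_coe]
  have hexp : Complex.exp ((Complex.arg (p * q * r * s) : ℝ) * Complex.I) = p * q * r * s := by
    have := Complex.norm_mul_exp_arg_mul_I (p * q * r * s)
    rwa [habs, Complex.ofReal_one, one_mul] at this
  set ω : ℂ := Complex.exp ((-(Complex.arg (p * q * r * s)) / 2 : ℝ) * Complex.I) with hωdef
  have hωne : ω ≠ 0 := Complex.exp_ne_zero _
  have hω2 : ω ^ 2 = (p * q * r * s)⁻¹ := by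
    rw [hωdef, sq, ← Complex.exp_add,
      show ((-(Complex.arg (p * q * r * s)) / 2 : ℝ) : ℂ) * Complex.I +
          ((-(Complex.arg (p * q * r * s)) / 2 : ℝ) : ℂ) * Complex.I
        = -((Complex.arg (p * q * r * s) : ℝ) * Complex.I) by push_cast; ring,
      Complex.exp_neg, hexp]
  have hcω : (starRingEnd ℂ) ω = ω⁻¹ := by
    rw [hωdef, ← Complex.exp_conj, ← Complex.exp_neg, map_mul, Complex.conj_ofReal,
      Complex.conj_I]
    ring_nf
  have hcalpha := conj_alpha p q r s hp0 hq0 hr0 hs0 hcp hcq hcr hcs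
  have hcbeta := conj_beta p q r s hp0 hq0 hr0 hs0 hcp hcq hcr hcs
  set t : ℝ := Real.sqrt (-K)⁻¹ with htdef
  have ht2 : (t : ℝ) ^ 2 = (-K)⁻¹ := Real.sq_sqrt (le_of_lt (inv_pos.2 (by linarith)))
  set a : ℂ := (t : ℂ) * ω * (p * q * (s - r) + r * s * (q - p)) with hadef
  set b : ℂ := (t : ℂ) * ω * (p * r - q * s) with hbdef
  have hconja : (starRingEnd ℂ) a = (t : ℂ) * ω * (p + r - q - s) := by
    rw [hadef, map_mul, map_mul, Complex.conj_ofReal, hcω, hcbeta, ← hω2]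
    field_simp
  have hconjb : (starRingEnd ℂ) b = -((t : ℂ) * ω * (p * r - q * s)) := by
    rw [hbdef, map_mul, map_mul, Complex.conj_ofReal, hcω, hcalpha, ← hω2]
    field_simp
  have hnormC : ((Complex.normSq a - Complex.normSq b : ℝ) : ℂ) = 1 := by
    push_cast
    rw [← Complex.mul_conj, ← Complex.mul_conj, hconja, hconjb]
    rw [show a * ((t : ℂ) * ω * (p + r - q - s)) - b * -((t : ℂ) * ω * (p * r - q * s))
        = ((t : ℝ) : ℂ) ^ 2 * (ω ^ 2 * -(-(p * r - q * s) ^ 2 -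
          (p * q * (s - r) + r * s * (q - p)) * (p + r - q - s))) by rw [hadef, hbdef]; ring]
    rw [← hKid, hω2]
    rw [show ((p * q * r * s)⁻¹ * -((K : ℝ) * (p * q * r * s)) : ℂ) = ((-K : ℝ) : ℂ) by
      push_cast; field_simp; rw [mul_div_cancel_left₀ _ hPine]]
    rw [show (((t : ℝ) : ℂ)) ^ 2 * ((-K : ℝ) : ℂ) = ((t ^ 2 * (-K) : ℝ) : ℂ) by push_cast; ring]
    rw [ht2, inv_mul_cancel₀ (by linarith : (-K : ℝ) ≠ 0), Complex.ofReal_one]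
  have hnorm : Complex.normSq a - Complex.normSq b = 1 := by exact_mod_cast hnormC
  refine ⟨⟨a, b, hnorm, false⟩, rfl, ?_, ?_, ?_, ?_⟩
  · apply applyS_eq_of_rev _ rfl
    show a * (starRingEnd ℂ) p + b = r * ((starRingEnd ℂ) b * (starRingEnd ℂ) p + (starRingEnd ℂ) a)
    rw [hconja, hconjb, hcp, hadef, hbdef]
    field_simp [show (p : ℂ) ≠ 0 from hp0]
    ring
  · apply applyS_eq_of_rev _ rfl
    show a * (starRingEnd ℂ) q + b = s * ((starRingEnd ℂ) b * (starRingEnd ℂ) q + (starRingEnd ℂ) a)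
    rw [hconja, hconjb, hcq, hadef, hbdef]
    field_simp [show (q : ℂ) ≠ 0 from hq0]
    ring
  · apply applyS_eq_of_rev _ rfl
    show a * (starRingEnd ℂ) r + b = p * ((starRingEnd ℂ) b * (starRingEnd ℂ) r + (starRingEnd ℂ) a)
    rw [hconja, hconjb, hcr, hadef, hbdef]
    field_simp [show (r : ℂ) ≠ 0 from hr0]
    ring
  · apply applyS_eq_of_rev _ rfl
    show a * (starRingEnd ℂ) s + b = q * ((starRingEnd ℂ) b * (starRingEnd ℂ) s + (starRingEnd ℂ) a)
    rw [hconja, hconjb, hcs, hadef, hbdef]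
    field_simp [show (s : ℂ) ≠ 0 from hs0]
    ring

lemma vanish (b : (Fin 4 → Circle × Circle) → ℝ) (halt : Alternating b) (hinv : HInvariant b)
    (p1 p2 p3 p4 q1 q2 q3 q4 : Circle)
    (hp : 0 < Idet p1 p2 p3 * Idet p1 p3 p4)
    (hq : Idet q1 q2 q3 * Idet q1 q3 q4 < 0) :
    b ![(p1, q1), (p2, q2), (p3, q3), (p4, q4)] = 0 := by
  obtain ⟨g, hg, g13, g24, g31, g42⟩ := exists_pres_swap p1 p2 p3 p4 hp
  obtain ⟨h, hh, h13, h24, h31, h42⟩ := exists_rev_swap q1 q2 q3 q4 hq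
  set z : Fin 4 → Circle × Circle := ![(p1, q1), (p2, q2), (p3, q3), (p4, q4)] with hz
  have hsgn : g.sgn * h.sgn = -1 := by
    rw [DiskIsom.sgn, DiskIsom.sgn, hg, hh]; norm_num
  have h1 := hinv.1 g h z
  set σ : Equiv.Perm (Fin 4) := Equiv.swap 0 2 * Equiv.swap 1 3 with hσ
  have h2 : (fun i => (g.applyS (z i).1, h.applyS (z i).2)) = fun i => z (σ i) := by
    funext i
    fin_cases i
    · show (g.applyS (z 0).1, h.applyS (z 0).2) = z (σ 0)
      rw [show σ 0 = 2 by decide]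
      simp [hz, g13, h13]
    · show (g.applyS (z 1).1, h.applyS (z 1).2) = z (σ 1)
      rw [show σ 1 = 3 by decide]
      simp [hz, g24, h24]
    · show (g.applyS (z 2).1, h.applyS (z 2).2) = z (σ 2)
      rw [show σ 2 = 0 by decide]
      simp [hz, g31, h31]
    · show (g.applyS (z 3).1, h.applyS (z 3).2) = z (σ 3)
      rw [show σ 3 = 1 by decide]
      simp [hz, g42, h42]
  have h3 := halt σ z
  have hσs : ((Equiv.Perm.sign σ : ℤ) : ℝ) = 1 := by
    rw [show Equiv.Perm.sign σ = 1 by decide]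
    norm_num
  rw [h2, h3, hσs, one_mul] at h1
  rw [hsgn] at h1
  linarith

lemma orient_eq_sign (a b c : Circle) : orient a b c = Real.sign (Idet a b c) := rfl

lemma Idet_swap12 (a b c : Circle) : Idet b a c = -Idet a b c := by
  simp only [Idet, Complex.mul_im, Complex.sub_re, Complex.sub_im, Complex.conj_re,
    Complex.conj_im]
  ring

lemma Idet_swap23 (a b c : Circle) : Idet a c b = -Idet a b c := by
  simp only [Idet, Complex.mul_im, Complex.sub_re, Complex.sub_im, Complex.conj_re,
    Complex.conj_im]
  ring

lemma Idet_cyc (a b c : Circle) : Idet b c a = Idet a b c := by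
  have h1 := Idet_swap23 b a c
  have h2 := Idet_swap12 a b c
  linarith

lemma sign_eq_one_imp {t : ℝ} (h : Real.sign t = 1) : 0 < t := by
  rcases lt_trichotomy t 0 with h' | h' | h'
  · rw [Real.sign_of_neg h'] at h; norm_num at h
  · rw [h', Real.sign_zero] at h; norm_num at h
  · exact h'

lemma pco_Idet_pos {n : ℕ} {x : Fin n → Circle} (hx : PosCyclicallyOrdered x)
    {i j k : Fin n} (hij : i < j) (hjk : j < k) : 0 < Idet (x i) (x j) (x k) :=
  sign_eq_one_imp (hx i j k hij hjk)

def e3 {n : ℕ} (i j k : Fin n) : ℤ :=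
  (if i < j then 1 else -1) * (if j < k then 1 else -1) * (if i < k then 1 else -1)

lemma orient_perm {n : ℕ} {x : Fin n → Circle} (hx : PosCyclicallyOrdered x) (i j k : Fin n)
    (hij : i ≠ j) (hik : i ≠ k) (hjk : j ≠ k) :
    orient (x i) (x j) (x k) = ((e3 i j k : ℤ) : ℝ) := by
  have hsx : ∀ a b c : Fin n, a < b → b < c → orient (x a) (x b) (x c) = 1 := hx
  have hval : ∀ a b c : Fin n, a < b → b < c →
      Real.sign (Idet (x a) (x b) (x c)) = 1 := hx
  rcases hij.lt_or_gt with h1 | h1 <;> rcases hik.lt_or_gt with h2 | h2 <;>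
    rcases hjk.lt_or_gt with h3 | h3
  · -- i<j, i<k, j<k
    rw [hx i j k h1 h3, e3, if_pos h1, if_pos h3, if_pos h2]; norm_num
  · -- i<j, i<k, k<j
    rw [orient_eq_sign, Idet_swap23 (x i) (x k) (x j), Real.sign_neg, hval i k j h2 h3]
    rw [e3, if_pos h1, if_neg (not_lt.2 h3.le), if_pos h2]; norm_num
  · -- i<j, k<i, j<k : impossible
    exact absurd (h1.trans h3) (not_lt.2 h2.le)
  · -- i<j, k<i, k<j
    rw [orient_eq_sign, show Idet (x i) (x j) (x k) = Idet (x k) (x i) (x j) from by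
      rw [← Idet_cyc (x k) (x i) (x j)],
      hval k i j h2 h1]
    rw [e3, if_pos h1, if_neg (not_lt.2 h3.le), if_neg (not_lt.2 h2.le)]; norm_num
  · -- j<i, i<k, j<k
    rw [orient_eq_sign, show Idet (x i) (x j) (x k) = -Idet (x j) (x i) (x k) from by
      rw [Idet_swap12],
      Real.sign_neg, hval j i k h1 h2]
    rw [e3, if_neg (not_lt.2 h1.le), if_pos h3, if_pos h2]; norm_num
  · -- j<i, i<k, k<j : impossible
    exact absurd (h2.trans h3) (not_lt.2 h1.le)
  · -- j<i, k<i, j<k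
    rw [orient_eq_sign, show Idet (x i) (x j) (x k) = Idet (x j) (x k) (x i) from
      (Idet_cyc (x i) (x j) (x k)).symm, hval j k i h3 h2]
    rw [e3, if_neg (not_lt.2 h1.le), if_pos h3, if_neg (not_lt.2 h2.le)]; norm_num
  · -- j<i, k<i, k<j
    rw [orient_eq_sign, show Idet (x i) (x j) (x k) = -Idet (x k) (x j) (x i) from by
      rw [show Idet (x k) (x j) (x i) = -Idet (x j) (x k) (x i) from Idet_swap12 _ _ _,
        show Idet (x j) (x k) (x i) = Idet (x i) (x j) (x k) from Idet_cyc _ _ _]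
      ring,
      Real.sign_neg, hval k j i h3 h1]
    rw [e3, if_neg (not_lt.2 h1.le), if_neg (not_lt.2 h3.le), if_neg (not_lt.2 h2.le)]; norm_num

def piF : Fin 5 → Fin 5 := ![0, 2, 4, 1, 3]

lemma theta_extremal (x y : Fin 5 → Circle)
    (hx : PosCyclicallyOrdered x) (hy : PosCyclicallyOrdered y) :
    Theta ![(x 0, y 0), (x 1, y 2), (x 2, y 4), (x 3, y 1), (x 4, y 3)] = 2 / 3 := by
  set w : Fin 5 → Circle × Circle :=
    ![(x 0, y 0), (x 1, y 2), (x 2, y 4), (x 3, y 1), (x 4, y 3)] with hw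
  have hw1 : ∀ i, (w i).1 = x i := by
    intro i; fin_cases i <;> rfl
  have hw2 : ∀ i, (w i).2 = y (piF i) := by
    intro i; fin_cases i <;> rfl
  have hpiInj : Function.Injective piF := by decide
  have key : ∀ σ : Equiv.Perm (Fin 5),
      ((Equiv.Perm.sign σ : ℤ) : ℝ) *
        (orient (w (σ 0)).1 (w (σ 1)).1 (w (σ 2)).1 *
          orient (w (σ 2)).2 (w (σ 3)).2 (w (σ 4)).2)
      = (((Equiv.Perm.sign σ : ℤ) *
          (e3 (σ 0) (σ 1) (σ 2) * e3 (piF (σ 2)) (piF (σ 3)) (piF (σ 4))) : ℤ) : ℝ) := by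
    intro σ
    have d01 : σ 0 ≠ σ 1 := fun h => (by decide : (0 : Fin 5) ≠ 1) (σ.injective h)
    have d02 : σ 0 ≠ σ 2 := fun h => (by decide : (0 : Fin 5) ≠ 2) (σ.injective h)
    have d12 : σ 1 ≠ σ 2 := fun h => (by decide : (1 : Fin 5) ≠ 2) (σ.injective h)
    have d23 : piF (σ 2) ≠ piF (σ 3) := fun h =>
      (by decide : (2 : Fin 5) ≠ 3) (σ.injective (hpiInj h))
    have d24 : piF (σ 2) ≠ piF (σ 4) := fun h =>
      (by decide : (2 : Fin 5) ≠ 4) (σ.injective (hpiInj h))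
    have d34 : piF (σ 3) ≠ piF (σ 4) := fun h =>
      (by decide : (3 : Fin 5) ≠ 4) (σ.injective (hpiInj h))
    rw [hw1, hw1, hw1, hw2, hw2, hw2,
      orient_perm hx _ _ _ d01 d02 d12,
      orient_perm hy _ _ _ d23 d24 d34]
    push_cast
    ring
  rw [Theta, Finset.sum_congr rfl fun σ _ => key σ, ← Int.cast_sum,
    show (∑ σ : Equiv.Perm (Fin 5),
        (Equiv.Perm.sign σ : ℤ) *
          (e3 (σ 0) (σ 1) (σ 2) * e3 (piF (σ 2)) (piF (σ 3)) (piF (σ 4)))) = 80 from by decide]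
  norm_num


theorem coboundary_vanishes_on_extremal_tuple (b : (Fin 4 → Circle × Circle) → ℝ)
    (halt : Alternating b) (hinv : HInvariant b)
    (hbdd : ∃ C : ℝ, ∀ z : Fin 4 → Circle × Circle, |b z| ≤ C)
    (x y : Fin 5 → Circle)
    (hx : PosCyclicallyOrdered x) (hy : PosCyclicallyOrdered y) :
    cobdry b ![(x 0, y 0), (x 1, y 2), (x 2, y 4), (x 3, y 1), (x 4, y 3)] = 0 ∧
      (∀ C : ℝ, (∀ z : Fin 5 → Circle × Circle, |Theta z + cobdry b z| ≤ C) → 2 / 3 ≤ C) := by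
  have hxp : ∀ (i j k : Fin 5), i < j → j < k → 0 < Idet (x i) (x j) (x k) :=
    fun i j k hij hjk => pco_Idet_pos hx hij hjk
  have hyp : ∀ (i j k : Fin 5), i < j → j < k → 0 < Idet (y i) (y j) (y k) :=
    fun i j k hij hjk => pco_Idet_pos hy hij hjk
  set w : Fin 5 → Circle × Circle :=
    ![(x 0, y 0), (x 1, y 2), (x 2, y 4), (x 3, y 1), (x 4, y 3)] with hw
  have hcob : cobdry b w = 0 := by
    rw [cobdry]
    apply Finset.sum_eq_zero
    intro i _
    fin_cases i
    · show (-1 : ℝ) ^ (((0 : Fin 5)) : ℕ) * b (fun j => w ((0 : Fin 5).succAbove j)) = 0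
      have he : (fun j => w ((0 : Fin 5).succAbove j))
          = ![(x 1, y 2), (x 2, y 4), (x 3, y 1), (x 4, y 3)] := by
        funext j; fin_cases j <;> rfl
      rw [he, vanish b halt hinv _ _ _ _ _ _ _ _
        (mul_pos (hxp 1 2 3 (by decide) (by decide)) (hxp 1 3 4 (by decide) (by decide)))
        (by
          have h1 := hyp 1 2 4 (by decide) (by decide)
          have h2 := hyp 1 2 3 (by decide) (by decide)
          have e1 := Idet_cyc (y 1) (y 2) (y 4)
          have e2 := Idet_swap12 (y 1) (y 2) (y 3)
          nlinarith [e1, e2]), mul_zero]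
    · show (-1 : ℝ) ^ (((1 : Fin 5)) : ℕ) * b (fun j => w ((1 : Fin 5).succAbove j)) = 0
      have he : (fun j => w ((1 : Fin 5).succAbove j))
          = ![(x 0, y 0), (x 2, y 4), (x 3, y 1), (x 4, y 3)] := by
        funext j; fin_cases j <;> rfl
      rw [he, vanish b halt hinv _ _ _ _ _ _ _ _
        (mul_pos (hxp 0 2 3 (by decide) (by decide)) (hxp 0 3 4 (by decide) (by decide)))
        (by
          have h1 := hyp 0 1 4 (by decide) (by decide)
          have h2 := hyp 0 1 3 (by decide) (by decide)
          have e1 := Idet_swap23 (y 0) (y 1) (y 4)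
          nlinarith [e1]), mul_zero]
    · show (-1 : ℝ) ^ (((2 : Fin 5)) : ℕ) * b (fun j => w ((2 : Fin 5).succAbove j)) = 0
      have he : (fun j => w ((2 : Fin 5).succAbove j))
          = ![(x 0, y 0), (x 1, y 2), (x 3, y 1), (x 4, y 3)] := by
        funext j; fin_cases j <;> rfl
      rw [he, vanish b halt hinv _ _ _ _ _ _ _ _
        (mul_pos (hxp 0 1 3 (by decide) (by decide)) (hxp 0 3 4 (by decide) (by decide)))
        (by
          have h1 := hyp 0 1 2 (by decide) (by decide)
          have h2 := hyp 0 1 3 (by decide) (by decide)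
          have e1 := Idet_swap23 (y 0) (y 1) (y 2)
          nlinarith [e1]), mul_zero]
    · show (-1 : ℝ) ^ (((3 : Fin 5)) : ℕ) * b (fun j => w ((3 : Fin 5).succAbove j)) = 0
      have he : (fun j => w ((3 : Fin 5).succAbove j))
          = ![(x 0, y 0), (x 1, y 2), (x 2, y 4), (x 4, y 3)] := by
        funext j; fin_cases j <;> rfl
      rw [he, vanish b halt hinv _ _ _ _ _ _ _ _
        (mul_pos (hxp 0 1 2 (by decide) (by decide)) (hxp 0 2 4 (by decide) (by decide)))
        (by
          have h1 := hyp 0 2 4 (by decide) (by decide)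
          have h2 := hyp 0 3 4 (by decide) (by decide)
          have e1 := Idet_swap23 (y 0) (y 3) (y 4)
          nlinarith [e1]), mul_zero]
    · show (-1 : ℝ) ^ (((4 : Fin 5)) : ℕ) * b (fun j => w ((4 : Fin 5).succAbove j)) = 0
      have he : (fun j => w ((4 : Fin 5).succAbove j))
          = ![(x 0, y 0), (x 1, y 2), (x 2, y 4), (x 3, y 1)] := by
        funext j; fin_cases j <;> rfl
      rw [he, vanish b halt hinv _ _ _ _ _ _ _ _
        (mul_pos (hxp 0 1 2 (by decide) (by decide)) (hxp 0 2 3 (by decide) (by decide)))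
        (by
          have h1 := hyp 0 2 4 (by decide) (by decide)
          have h2 := hyp 0 1 4 (by decide) (by decide)
          have e1 := Idet_swap23 (y 0) (y 1) (y 4)
          nlinarith [e1]), mul_zero]
  refine ⟨hcob, fun C hC => ?_⟩
  have h := hC w
  rw [hcob, add_zero, theta_extremal x y hx hy] at h
  have habs : |(2 / 3 : ℝ)| = 2 / 3 := abs_of_pos (by norm_num)
  linarith
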